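/- For all 1 ≤ r, s, s' ≤ p, all 1 ≤ i ≤ m, all 1 ≤ a, b ≤ d', and all integers k, l ≥ 0, the commutator in End_ℂ(P) satisfies ⁅F_a(r,s;k), K_b(i,s';l)⁆ = −δ_{a,b}·δ_{r,s'}·K_a(i,s;k+l). (This is part of the homomorphism property established in Proposition 4.2 of the paper, corresponding to the Takiff relation [E^r_s ⊗ t̄_{w_a}^k, E^{p+q+i}_{s'} ⊗ t̄_{w_b}^l] = −δ_{a,b} δ_{r,s'} E^{p+q+i}_s ⊗ t̄_{w_a}^{k+l} in the purely even case.) -/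

import Mathlib

open MvPolynomial

/-- Multiplication by the variable `v`, as a `ℂ`-linear endomorphism of the
polynomial ring. -/
noncomputable def mulOp {σ : Type*} (v : σ) :
    Module.End ℂ (MvPolynomial σ ℂ) :=
  LinearMap.mulLeft ℂ (X v)

/-- The partial derivative with respect to the variable `v`, as a `ℂ`-linear endomorphism
of the polynomial ring. -/
noncomputable def derOp {σ : Type*} (v : σ) :
    Module.End ℂ (MvPolynomial σ ℂ) :=
  (pderiv v).toLinearMap

/-- The variable `y^α_r` of the Fock space `MvPolynomial (Fin d × (Fin p ⊕ Fin m)) ℂ`,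
with superscript index `α` (0-based, a natural number) and subscript `r : Fin p`. -/
def yvar (d p m : ℕ) (α : ℕ) (h : α < d) (r : Fin p) : Fin d × (Fin p ⊕ Fin m) :=
  (⟨α, h⟩, Sum.inl r)

/-- The variable `x^α_i`, with superscript index `α` (0-based) and subscript `i : Fin m`. -/
def xvar (d p m : ℕ) (α : ℕ) (h : α < d) (i : Fin m) : Fin d × (Fin p ⊕ Fin m) :=
  (⟨α, h⟩, Sum.inr i)

/-- `F_a(r,s;k) = -Σ_{α=D+1}^{D+ξ-k} ∂_{y^{α+k}_r} ∘ y^α_s`, where `D = d_a`, `ξ = ξ_a`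
(the superscripts are written 0-based, so `α` runs over `D, D+1, …, D+ξ-k-1`). -/
noncomputable def Fop (d p m : ℕ) (D ξ : ℕ) (r s : Fin p) (k : ℕ) :
    Module.End ℂ (MvPolynomial (Fin d × (Fin p ⊕ Fin m)) ℂ) :=
  - ∑ α ∈ Finset.range (ξ - k),
      if h : D + α + k < d then
        derOp (yvar d p m (D + α + k) h r) * mulOp (yvar d p m (D + α) (by omega) s)
      else 0

/-- `H_a(r,j;k) = Σ_{α=D+1}^{D+ξ-k} ∂_{y^{α+k}_r} ∘ ∂_{x^α_j}`, where `D = d_a`,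
`ξ = ξ_a`. -/
noncomputable def Hop (d p m : ℕ) (D ξ : ℕ) (r : Fin p) (j : Fin m) (k : ℕ) :
    Module.End ℂ (MvPolynomial (Fin d × (Fin p ⊕ Fin m)) ℂ) :=
  ∑ α ∈ Finset.range (ξ - k),
      if h : D + α + k < d then
        derOp (yvar d p m (D + α + k) h r) * derOp (xvar d p m (D + α) (by omega) j)
      else 0

/-- `K_a(i,s;k) = -Σ_{α=D+1}^{D+ξ-k} x^{α+k}_i ∘ y^α_s`, where `D = d_a`, `ξ = ξ_a`. -/
noncomputable def Kop (d p m : ℕ) (D ξ : ℕ) (i : Fin m) (s : Fin p) (k : ℕ) :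
    Module.End ℂ (MvPolynomial (Fin d × (Fin p ⊕ Fin m)) ℂ) :=
  - ∑ α ∈ Finset.range (ξ - k),
      if h : D + α + k < d then
        mulOp (xvar d p m (D + α + k) h i) * mulOp (yvar d p m (D + α) (by omega) s)
      else 0

/-- `G_a(i,j;k) = Σ_{α=D+1}^{D+ξ-k} x^{α+k}_i ∘ ∂_{x^α_j}`, where `D = d_a`, `ξ = ξ_a`. -/
noncomputable def Gop (d p m : ℕ) (D ξ : ℕ) (i j : Fin m) (k : ℕ) :
    Module.End ℂ (MvPolynomial (Fin d × (Fin p ⊕ Fin m)) ℂ) :=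
  ∑ α ∈ Finset.range (ξ - k),
      if h : D + α + k < d then
        mulOp (xvar d p m (D + α + k) h i) * derOp (xvar d p m (D + α) (by omega) j)
      else 0

lemma keycomm {σ : Type*} (u : σ) (q1 q2 : MvPolynomial σ ℂ) :
    (derOp u * LinearMap.mulLeft ℂ q1) * LinearMap.mulLeft ℂ q2
      - LinearMap.mulLeft ℂ q2 * (derOp u * LinearMap.mulLeft ℂ q1)
    = LinearMap.mulLeft ℂ ((pderiv u q2) * q1) := by
  apply LinearMap.ext; intro f
  simp only [LinearMap.sub_apply, Module.End.mul_apply, LinearMap.mulLeft_apply, derOp,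
    Derivation.coeFn_coe, pderiv_mul]
  ring

lemma term_comm {σ : Type*} [DecidableEq σ] (u v w z : σ) (huw : w ≠ u) :
    (derOp u * mulOp v) * (mulOp w * mulOp z) - (mulOp w * mulOp z) * (derOp u * mulOp v)
    = if u = z then mulOp w * mulOp v else 0 := by
  have h1 : mulOp (σ := σ) w * mulOp z = LinearMap.mulLeft ℂ (X w * X z) := by
    apply LinearMap.ext; intro f
    simp [mulOp, Module.End.mul_apply, LinearMap.mulLeft_apply, mul_assoc]
  have h2 : mulOp (σ := σ) v = LinearMap.mulLeft ℂ (X v) := rfl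
  rw [h1, h2, keycomm, pderiv_mul, pderiv_X_of_ne huw]
  by_cases huz : u = z
  · subst huz
    rw [if_pos rfl, pderiv_X_self]
    simp only [zero_mul, mul_one, zero_add]
    apply LinearMap.ext; intro f
    simp [mulOp, Module.End.mul_apply, LinearMap.mulLeft_apply, mul_assoc]
  · rw [if_neg huz, pderiv_X_of_ne (Ne.symm huz)]
    simp

lemma sum_commutator {M : Type*} [Ring M] (s t : Finset ℕ) (f g : ℕ → M) :
    (∑ α ∈ s, f α) * (∑ β ∈ t, g β) - (∑ β ∈ t, g β) * (∑ α ∈ s, f α)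
    = ∑ α ∈ s, ∑ β ∈ t, (f α * g β - g β * f α) := by
  rw [Finset.sum_mul_sum,
    show (∑ β ∈ t, g β) * (∑ α ∈ s, f α) = ∑ α ∈ s, ∑ β ∈ t, g β * f α from by
      rw [Finset.sum_mul_sum]; exact Finset.sum_comm,
    ← Finset.sum_sub_distrib]
  exact Finset.sum_congr rfl fun α _ => by rw [Finset.sum_sub_distrib]

lemma xvar_congr (d p m n n' : ℕ) (h : n < d) (h' : n' < d) (i : Fin m) (e : n = n') :
    xvar d p m n h i = xvar d p m n' h' i := by subst e; rfl

/-- `⁅F_a(r,s;k), K_b(i,s';l)⁆ = -δ_{ab} δ_{r s'} K_a(i,s;k+l)`. -/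
theorem stmt12 (p m : ℕ) (hpm : 1 ≤ p + m) (d' : ℕ) (hd' : 1 ≤ d')
    (ξ : Fin d' → ℕ) (hξ : ∀ a, 0 < ξ a) (d : ℕ) (hd : d = ∑ a, ξ a)
    (D : Fin d' → ℕ)
    (hD : ∀ a, D a = ∑ b ∈ Finset.univ.filter (fun b => b < a), ξ b)
    (a b : Fin d') (r s s' : Fin p) (i : Fin m) (k l : ℕ) :
    Fop d p m (D a) (ξ a) r s k * Kop d p m (D b) (ξ b) i s' l
      - Kop d p m (D b) (ξ b) i s' l * Fop d p m (D a) (ξ a) r s k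
    = - (if a = b then
          (if r = s' then Kop d p m (D a) (ξ a) i s (k + l) else 0)
        else 0) := by
  classical
  have hDeq : ∀ c : Fin d', D c + ξ c = ∑ e ∈ Finset.univ.filter (fun e => e ≤ c), ξ e := by
    intro c
    have hins : Finset.univ.filter (fun e => e ≤ c)
        = insert c (Finset.univ.filter (fun e => e < c)) := by
      ext e
      simp only [Finset.mem_filter, Finset.mem_univ, true_and, Finset.mem_insert]
      constructor
      · intro h; exact (eq_or_lt_of_le h).imp id id
      · rintro (rfl | h)
        · exact le_refl _
        · exact le_of_lt h
    rw [hins, Finset.sum_insert (by simp), hD, add_comm]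
  have hDle : ∀ c : Fin d', D c + ξ c ≤ d := by
    intro c
    rw [hDeq c, hd]
    exact Finset.sum_le_sum_of_subset (Finset.filter_subset _ _)
  have hmono : ∀ {c e : Fin d'}, c < e → D c + ξ c ≤ D e := by
    intro c e hce
    rw [hDeq c, hD e]
    refine Finset.sum_le_sum_of_subset ?_
    intro f hf
    simp only [Finset.mem_filter, Finset.mem_univ, true_and] at hf ⊢
    exact lt_of_le_of_lt hf hce
  have hne : ∀ {α β : ℕ}, α < ξ a → β < ξ b → a ≠ b → D a + α ≠ D b + β := by
    intro α β hα hβ hab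
    rcases hab.lt_or_gt with h | h
    · have := hmono h; omega
    · have := hmono h; omega
  have hda := hDle a
  have hdb := hDle b
  simp only [Fop, Kop]
  have hnn : ∀ A B : Module.End ℂ (MvPolynomial (Fin d × (Fin p ⊕ Fin m)) ℂ),
      -A * -B = A * B := fun A B => neg_mul_neg A B
  rw [hnn, hnn, sum_commutator]
  have mid : (∑ α ∈ Finset.range (ξ a - k), ∑ β ∈ Finset.range (ξ b - l),
      ((if h : D a + α + k < d then
          derOp (yvar d p m (D a + α + k) h r) * mulOp (yvar d p m (D a + α) (by omega) s)
        else 0) *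
       (if h : D b + β + l < d then
          mulOp (xvar d p m (D b + β + l) h i) * mulOp (yvar d p m (D b + β) (by omega) s')
        else 0) -
       (if h : D b + β + l < d then
          mulOp (xvar d p m (D b + β + l) h i) * mulOp (yvar d p m (D b + β) (by omega) s')
        else 0) *
       (if h : D a + α + k < d then
          derOp (yvar d p m (D a + α + k) h r) * mulOp (yvar d p m (D a + α) (by omega) s)
        else 0)))
      = ∑ α ∈ Finset.range (ξ a - k), ∑ β ∈ Finset.range (ξ b - l),
          (if D a + α + k = D b + β ∧ r = s' then
            (if h : D b + β + l < d ∧ D a + α < d then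
              mulOp (xvar d p m (D b + β + l) h.1 i) * mulOp (yvar d p m (D a + α) h.2 s)
            else 0)
          else 0) := by
    refine Finset.sum_congr rfl fun α hα => Finset.sum_congr rfl fun β hβ => ?_
    simp only [Finset.mem_range] at hα hβ
    rw [dif_pos (show D a + α + k < d by omega), dif_pos (show D b + β + l < d by omega),
      term_comm, dif_pos (show D b + β + l < d ∧ D a + α < d by omega)]
    · exact if_congr (by simp [yvar]) rfl rfl
    · simp [xvar, yvar]
  rw [mid]
  by_cases hab : a = b
  · subst hab
    by_cases hrs : r = s'
    · subst hrs
      rw [if_pos rfl, if_pos rfl, neg_neg]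
      calc (∑ α ∈ Finset.range (ξ a - k), ∑ β ∈ Finset.range (ξ a - l),
              (if D a + α + k = D a + β ∧ r = r then
                (if h : D a + β + l < d ∧ D a + α < d then
                  mulOp (xvar d p m (D a + β + l) h.1 i) * mulOp (yvar d p m (D a + α) h.2 s)
                else 0)
              else 0))
          = ∑ α ∈ Finset.range (ξ a - k),
              (if α + k ∈ Finset.range (ξ a - l) then
                (if h : D a + (α + k) + l < d ∧ D a + α < d then
                  mulOp (xvar d p m (D a + (α + k) + l) h.1 i)
                    * mulOp (yvar d p m (D a + α) h.2 s)
                else 0)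
              else 0) := by
            refine Finset.sum_congr rfl fun α hα => ?_
            rw [Finset.sum_congr rfl fun β _ => if_congr
              (show (D a + α + k = D a + β ∧ r = r) ↔ (α + k = β) by
                constructor
                · rintro ⟨h, -⟩; omega
                · intro h; exact ⟨by omega, rfl⟩) rfl rfl]
            exact Finset.sum_ite_eq (Finset.range (ξ a - l)) (α + k) _
        _ = ∑ α ∈ Finset.range (ξ a - k),
              (if α ∈ Finset.range (ξ a - (k + l)) then
                (if h : D a + α + (k + l) < d ∧ D a + α < d then
                  mulOp (xvar d p m (D a + α + (k + l)) h.1 i)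
                    * mulOp (yvar d p m (D a + α) h.2 s)
                else 0)
              else 0) := by
            refine Finset.sum_congr rfl fun α hα => ?_
            refine if_congr (by simp only [Finset.mem_range]; omega) ?_ rfl
            by_cases h : D a + α + (k + l) < d
            · rw [dif_pos (show D a + (α + k) + l < d ∧ D a + α < d by omega),
                dif_pos (show D a + α + (k + l) < d ∧ D a + α < d by omega)]
              rw [xvar_congr d p m (D a + (α + k) + l) (D a + α + (k + l))
                (by omega) (by omega) i (by omega)]
            · rw [dif_neg (by omega), dif_neg (by omega)]
        _ = ∑ α ∈ Finset.range (ξ a - k) ∩ Finset.range (ξ a - (k + l)),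
              (if h : D a + α + (k + l) < d ∧ D a + α < d then
                mulOp (xvar d p m (D a + α + (k + l)) h.1 i)
                  * mulOp (yvar d p m (D a + α) h.2 s)
              else 0) := Finset.sum_ite_mem _ _ _
        _ = ∑ α ∈ Finset.range (ξ a - (k + l)),
              (if h : D a + α + (k + l) < d ∧ D a + α < d then
                mulOp (xvar d p m (D a + α + (k + l)) h.1 i)
                  * mulOp (yvar d p m (D a + α) h.2 s)
              else 0) := by
            congr 1
            ext x
            simp only [Finset.mem_inter, Finset.mem_range]
            omega
        _ = ∑ α ∈ Finset.range (ξ a - (k + l)),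
              (if h : D a + α + (k + l) < d then
                mulOp (xvar d p m (D a + α + (k + l)) h i)
                  * mulOp (yvar d p m (D a + α) (by omega) s)
              else 0) := by
            refine Finset.sum_congr rfl fun α hα => ?_
            simp only [Finset.mem_range] at hα
            rw [dif_pos (show D a + α + (k + l) < d ∧ D a + α < d by omega),
              dif_pos (show D a + α + (k + l) < d by omega)]
    · rw [if_pos rfl, if_neg hrs, neg_zero]
      exact Finset.sum_eq_zero fun α _ => Finset.sum_eq_zero fun β _ =>
        if_neg (fun hc => hrs hc.2)
  · rw [if_neg hab, neg_zero]
    refine Finset.sum_eq_zero fun α hα => Finset.sum_eq_zero fun β hβ => if_neg ?_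
    simp only [Finset.mem_range] at hα hβ
    rintro ⟨h1, -⟩
    exact hne (show α + k < ξ a by omega) (show β < ξ b by omega) hab (by omega)
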